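/- Recovering a discrete measure from its expected signature: let X_1,...,X_n be paths of finite variation with pairwise distinct signatures, and let X be a random path taking value X_i with probability λ_i (λ_i ≥ 0, Σλ_i = 1). Then for each i there is a linear form σ_i on T((ℝ^d)) with λ_i = σ_i(E[S(X)]), where E[S(X)] = Σ_{i=1}^n λ_i S(X_i). -/

import Mathlib

open MeasureTheory Set

/-- Iterated integral of a path against its derivative; the head letter is integrated
outermost (so this corresponds to the reversed word). -/
noncomputable def iterInt {d : ℕ} (X : ℝ → Fin d → ℝ) (a : ℝ) : List (Fin d) → ℝ → ℝ
  | [], _ => 1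
  | i :: I, b => ∫ u in a..b, iterInt X a I u * deriv (fun s => X s i) u

/-- Coordinate iterated integral `π^I(S(X))` over `[a,b]` for the word `I = (i₁,…,iₙ)`
(innermost integration first). -/
noncomputable def sigCoord {d : ℕ} (X : ℝ → Fin d → ℝ) (a b : ℝ) (I : List (Fin d)) : ℝ :=
  iterInt X a I.reverse b

/-- The signature of a path over `[a,b]`, as the family of its coordinate iterated
integrals indexed by words; this represents an element of the tensor algebra `T((ℝ^d))`. -/
noncomputable def Sig {d : ℕ} (X : ℝ → Fin d → ℝ) (a b : ℝ) : List (Fin d) → ℝ :=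
  fun I => sigCoord X a b I

/-- The product of the tensor algebra `T((ℝ^d))` in coordinates. -/
noncomputable def tmul {d : ℕ} (x y : List (Fin d) → ℝ) : List (Fin d) → ℝ :=
  fun w => ∑ k ∈ Finset.range (w.length + 1), x (w.take k) * y (w.drop k)

/-- The unit of the tensor algebra. -/
def tunit {d : ℕ} : List (Fin d) → ℝ := fun w => if w = [] then 1 else 0

/-- The tensor exponential `exp(v) = Σ v^{⊗n}/n!` in coordinates. -/
noncomputable def texp {d : ℕ} (v : Fin d → ℝ) : List (Fin d) → ℝ :=
  fun w => (w.map v).prod / w.length.factorial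

/-- The multiset of shuffles of two words. -/
def shuffles {α : Type*} : List α → List α → Multiset (List α)
  | [], v => {v}
  | u, [] => {u}
  | a :: u, b :: v => ((shuffles u (b :: v)).map (a :: ·)) + ((shuffles (a :: u) v).map (b :: ·))
  termination_by u v => u.length + v.length

/-- `x` is in the range of the signature map on continuous bounded-variation paths. -/
def IsSignature {d : ℕ} (x : List (Fin d) → ℝ) : Prop :=
  ∃ (X : ℝ → Fin d → ℝ) (a b : ℝ), a ≤ b ∧ ContinuousOn X (Set.Icc a b) ∧
    BoundedVariationOn X (Set.Icc a b) ∧ x = Sig X a b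

/-- Evaluation of a (finitely supported) linear form on `T((ℝ^d))`. -/
noncomputable def formEval {d : ℕ} (f : List (Fin d) →₀ ℝ) (x : List (Fin d) → ℝ) : ℝ :=
  f.sum fun w c => c * x w

/-- The shuffle product of two linear forms, extended bilinearly from words. -/
noncomputable def shuffleForm {d : ℕ} (f g : List (Fin d) →₀ ℝ) : List (Fin d) →₀ ℝ :=
  f.sum fun u cu => g.sum fun v cv =>
    (cu * cv) • ((shuffles u v).map fun w => Finsupp.single w (1 : ℝ)).sum

/-! ### Auxiliary results -/

section DerivIntegrable

/-- The derivative of a monotone function is integrable on any bounded interval. -/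
private lemma monotone_deriv_integrableOn {P : ℝ → ℝ} (hP : Monotone P) (a b : ℝ) :
    MeasureTheory.IntegrableOn (deriv P) (Set.Ioo a b) := by
  have h1 : deriv P =ᵐ[(volume : Measure ℝ)]
      fun x => (Measure.rnDeriv hP.stieltjesFunction.measure volume x).toReal := by
    filter_upwards [hP.ae_hasDerivAt] with x hx using hx.deriv
  have h2 : MeasureTheory.IntegrableOn
      (fun x => (Measure.rnDeriv hP.stieltjesFunction.measure volume x).toReal)
      (Set.Ioo a b) := by
    refine integrable_toReal_of_lintegral_ne_top
      (Measure.measurable_rnDeriv _ _).aemeasurable ?_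
    refine (Measure.lintegral_rnDeriv_lt_top_of_measure_ne_top volume ?_).ne
    exact ((measure_mono Set.Ioo_subset_Icc_self).trans_lt
      isCompact_Icc.measure_lt_top).ne
  exact h2.congr (Filter.EventuallyEq.symm (MeasureTheory.ae_restrict_of_ae h1))

/-- The derivative of a function of bounded variation on `[a,b]` is interval integrable. -/
private lemma bv_deriv_intervalIntegrable {f : ℝ → ℝ} {a b : ℝ} (hab : a ≤ b)
    (h : BoundedVariationOn f (Set.Icc a b)) :
    IntervalIntegrable (deriv f) volume a b := by
  obtain ⟨p, q, hp, hq, hpq⟩ :=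
    h.locallyBoundedVariationOn.exists_monotoneOn_sub_monotoneOn
  have hmem : a ∈ Set.Icc a b := Set.left_mem_Icc.2 hab
  have hmem' : b ∈ Set.Icc a b := Set.right_mem_Icc.2 hab
  obtain ⟨P, hPm, hPeq⟩ := hp.exists_monotone_extension
    ⟨p a, by rintro _ ⟨x, hx, rfl⟩; exact hp hmem hx hx.1⟩
    ⟨p b, by rintro _ ⟨x, hx, rfl⟩; exact hp hx hmem' hx.2⟩
  obtain ⟨Q, hQm, hQeq⟩ := hq.exists_monotone_extension
    ⟨q a, by rintro _ ⟨x, hx, rfl⟩; exact hq hmem hx hx.1⟩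
    ⟨q b, by rintro _ ⟨x, hx, rfl⟩; exact hq hx hmem' hx.2⟩
  have key : deriv f =ᵐ[volume.restrict (Set.Ioo a b)]
      fun x => deriv P x - deriv Q x := by
    filter_upwards [ae_restrict_of_ae hPm.ae_hasDerivAt,
      ae_restrict_of_ae hQm.ae_hasDerivAt,
      ae_restrict_mem measurableSet_Ioo] with x hx1 hx2 hx3
    have hfx : (fun y => P y - Q y) =ᶠ[nhds x] f := by
      filter_upwards [isOpen_Ioo.mem_nhds hx3] with y hy
      have hy' : y ∈ Set.Icc a b := Set.Ioo_subset_Icc_self hy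
      rw [← hPeq hy', ← hQeq hy', hpq]
      rfl
    have hd : HasDerivAt f (deriv P x - deriv Q x) x := by
      rw [hx1.deriv, hx2.deriv]
      exact (hx1.sub hx2).congr_of_eventuallyEq hfx.symm
    exact hd.deriv
  rw [intervalIntegrable_iff_integrableOn_Ioo_of_le hab]
  exact ((monotone_deriv_integrableOn hPm a b).sub
    (monotone_deriv_integrableOn hQm a b)).congr key.symm

end DerivIntegrable

section ProductRule

/-- Product rule for primitives of integrable functions, via Fubini. -/
private lemma prod_primitive {f g : ℝ → ℝ} {a b : ℝ} (hab : a ≤ b)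
    (hf : IntervalIntegrable f volume a b) (hg : IntervalIntegrable g volume a b) :
    (∫ s in a..b, f s) * (∫ t in a..b, g t)
      = (∫ t in a..b, (∫ s in a..t, f s) * g t)
        + (∫ t in a..b, (∫ s in a..t, g s) * f t) := by
  have hf' : MeasureTheory.IntegrableOn f (Set.Ioc a b) volume := by
    rwa [intervalIntegrable_iff_integrableOn_Ioc_of_le hab] at hf
  have hg' : MeasureTheory.IntegrableOn g (Set.Ioc a b) volume := by
    rwa [intervalIntegrable_iff_integrableOn_Ioc_of_le hab] at hg
  set μ : Measure ℝ := volume.restrict (Set.Ioc a b) with hμ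
  set H : ℝ × ℝ → ℝ := fun p => f p.1 * g p.2 with hH
  have hHint : MeasureTheory.Integrable H (μ.prod μ) := MeasureTheory.Integrable.mul_prod hf' hg'
  have hTm : MeasurableSet {p : ℝ × ℝ | p.1 ≤ p.2} :=
    measurableSet_le measurable_fst measurable_snd
  -- the T-term : `s ≤ t`
  have hB : (∫ p, ({p : ℝ × ℝ | p.1 ≤ p.2}).indicator H p ∂(μ.prod μ))
      = ∫ t in a..b, (∫ s in a..t, f s) * g t := by
    rw [← MeasureTheory.integral_prod_swap]
    rw [MeasureTheory.integral_prod
      (fun z : ℝ × ℝ => ({p : ℝ × ℝ | p.1 ≤ p.2}).indicator H z.swap)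
      ((hHint.indicator hTm).swap)]
    rw [intervalIntegral.integral_of_le hab]
    refine MeasureTheory.setIntegral_congr_fun measurableSet_Ioc (fun x hx => ?_)
    have hinner : (fun y => ({p : ℝ × ℝ | p.1 ≤ p.2}).indicator H ((x, y).swap))
        = (Set.Iic x).indicator (fun y => f y * g x) := by
      funext y
      simp only [Set.indicator_apply, Prod.swap_prod_mk, Set.mem_setOf_eq, Set.mem_Iic, hH]
    rw [hinner, MeasureTheory.integral_indicator measurableSet_Iic, hμ,
      Measure.restrict_restrict measurableSet_Iic]
    have hxset : Set.Iic x ∩ Set.Ioc a b = Set.Ioc a x := by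
      ext y
      simp only [Set.mem_inter_iff, Set.mem_Iic, Set.mem_Ioc]
      exact ⟨fun ⟨h1, h2, h3⟩ => ⟨h2, h1⟩, fun ⟨h1, h2⟩ => ⟨h2, h1, h2.trans hx.2⟩⟩
    rw [hxset, MeasureTheory.integral_mul_const,
      intervalIntegral.integral_of_le hx.1.le]
  -- the Tᶜ-term : `t < s`
  have hA : (∫ p, ({p : ℝ × ℝ | p.1 ≤ p.2}ᶜ).indicator H p ∂(μ.prod μ))
      = ∫ t in a..b, (∫ s in a..t, g s) * f t := by
    rw [MeasureTheory.integral_prod _ (hHint.indicator hTm.compl)]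
    rw [intervalIntegral.integral_of_le hab]
    refine MeasureTheory.setIntegral_congr_fun measurableSet_Ioc (fun x hx => ?_)
    have hinner : (fun y => ({p : ℝ × ℝ | p.1 ≤ p.2}ᶜ).indicator H (x, y))
        = (Set.Iio x).indicator (fun y => f x * g y) := by
      funext y
      simp only [Set.indicator_apply, Set.mem_compl_iff, Set.mem_setOf_eq, Set.mem_Iio,
        not_le, hH]
    rw [hinner, MeasureTheory.integral_indicator measurableSet_Iio, hμ,
      Measure.restrict_restrict measurableSet_Iio]
    have hxset : Set.Iio x ∩ Set.Ioc a b = Set.Ioo a x := by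
      ext y
      simp only [Set.mem_inter_iff, Set.mem_Iio, Set.mem_Ioc, Set.mem_Ioo]
      exact ⟨fun ⟨h1, h2, h3⟩ => ⟨h2, h1⟩, fun ⟨h1, h2⟩ => ⟨h2, h1, (h2.trans_le hx.2).le⟩⟩
    rw [hxset, MeasureTheory.integral_const_mul,
      intervalIntegral.integral_of_le hx.1.le, MeasureTheory.integral_Ioc_eq_integral_Ioo]
    ring
  calc (∫ s in a..b, f s) * (∫ t in a..b, g t)
      = (∫ s, f s ∂μ) * (∫ t, g t ∂μ) := by
        rw [intervalIntegral.integral_of_le hab, intervalIntegral.integral_of_le hab]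
    _ = ∫ p, H p ∂(μ.prod μ) := (MeasureTheory.integral_prod_mul f g).symm
    _ = (∫ p, ({p : ℝ × ℝ | p.1 ≤ p.2}).indicator H p ∂(μ.prod μ))
        + (∫ p, ({p : ℝ × ℝ | p.1 ≤ p.2}ᶜ).indicator H p ∂(μ.prod μ)) := by
        rw [← MeasureTheory.integral_add (hHint.indicator hTm) (hHint.indicator hTm.compl)]
        congr 1
        funext p
        exact (Set.indicator_self_add_compl_apply _ _ _).symm
    _ = _ := by rw [hA, hB]

end ProductRule

section IterInt

variable {d : ℕ} {Y : ℝ → Fin d → ℝ} {a b : ℝ}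

private lemma iterInt_cont (hab : a ≤ b)
    (hfi : ∀ i, IntervalIntegrable (fun u => deriv (fun s => Y s i) u) volume a b) :
    ∀ I : List (Fin d), ContinuousOn (iterInt Y a I) (Set.Icc a b)
  | [] => by
      have : iterInt Y a ([] : List (Fin d)) = fun _ => (1 : ℝ) := rfl
      rw [this]; exact continuousOn_const
  | i :: I => by
      have hI := iterInt_cont hab hfi I
      have hint : IntervalIntegrable
          (fun u => iterInt Y a I u * deriv (fun s => Y s i) u) volume a b :=
        (hfi i).continuousOn_mul (by rwa [Set.uIcc_of_le hab])
      have : iterInt Y a (i :: I)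
          = fun t => ∫ u in a..t, iterInt Y a I u * deriv (fun s => Y s i) u := rfl
      rw [this, ← Set.uIcc_of_le hab]
      exact intervalIntegral.continuousOn_primitive_interval' hint Set.left_mem_uIcc

private lemma iterInt_mul_intInt (hab : a ≤ b)
    (hfi : ∀ i, IntervalIntegrable (fun u => deriv (fun s => Y s i) u) volume a b)
    (I : List (Fin d)) (i : Fin d) :
    IntervalIntegrable (fun u => iterInt Y a I u * deriv (fun s => Y s i) u) volume a b :=
  (hfi i).continuousOn_mul (by rw [Set.uIcc_of_le hab]; exact iterInt_cont hab hfi I)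

private lemma multiset_sum_cont (hab : a ≤ b)
    (hfi : ∀ i, IntervalIntegrable (fun u => deriv (fun s => Y s i) u) volume a b)
    (m : Multiset (List (Fin d))) :
    ContinuousOn (fun t => ((m.map (fun w => iterInt Y a w t)).sum)) (Set.Icc a b) := by
  induction m using Multiset.induction_on with
  | empty => simpa using continuousOn_const
  | cons w m ih =>
      simp only [Multiset.map_cons, Multiset.sum_cons]
      exact (iterInt_cont hab hfi w).add ih

private lemma multiset_integral (hab : a ≤ b)
    (hfi : ∀ i, IntervalIntegrable (fun u => deriv (fun s => Y s i) u) volume a b)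
    (i : Fin d) (m : Multiset (List (Fin d))) {c : ℝ} (hc : c ∈ Set.Icc a b) :
    (∫ t in a..c, (m.map fun w => iterInt Y a w t).sum * deriv (fun s => Y s i) t)
      = (m.map fun w => ∫ t in a..c, iterInt Y a w t * deriv (fun s => Y s i) t).sum := by
  have hsub : Set.uIcc a c ⊆ Set.uIcc a b := by
    rw [Set.uIcc_of_le hab, Set.uIcc_of_le hc.1]
    exact Set.Icc_subset_Icc le_rfl hc.2
  induction m using Multiset.induction_on with
  | empty => simp
  | cons w m ih =>
      simp only [Multiset.map_cons, Multiset.sum_cons, add_mul]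
      rw [intervalIntegral.integral_add
        ((iterInt_mul_intInt hab hfi w i).mono_set hsub)
        (((hfi i).continuousOn_mul
          (by rw [Set.uIcc_of_le hab]; exact multiset_sum_cont hab hfi m)).mono_set hsub),
        ih]

/-- The shuffle identity for iterated integrals. -/
private lemma shuffle_iterInt (hab : a ≤ b)
    (hfi : ∀ i, IntervalIntegrable (fun u => deriv (fun s => Y s i) u) volume a b) :
    ∀ (u v : List (Fin d)), ∀ c ∈ Set.Icc a b,
      iterInt Y a u c * iterInt Y a v c
        = ((shuffles u v).map (fun w => iterInt Y a w c)).sum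
  | [], v => fun c _ => by
      have h1 : iterInt Y a ([] : List (Fin d)) c = 1 := rfl
      rw [h1, shuffles, one_mul, Multiset.map_singleton, Multiset.sum_singleton]
  | (i :: u), [] => fun c _ => by
      have h1 : iterInt Y a ([] : List (Fin d)) c = 1 := rfl
      rw [h1, shuffles, mul_one, Multiset.map_singleton, Multiset.sum_singleton]
      exact List.cons_ne_nil _ _
  | (i :: u), (j :: v) => fun c hc => by
      have hc' : Set.Icc a c ⊆ Set.Icc a b := Set.Icc_subset_Icc le_rfl hc.2
      have hsub : Set.uIcc a c ⊆ Set.uIcc a b := by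
        rw [Set.uIcc_of_le hab, Set.uIcc_of_le hc.1]; exact hc'
      have h1 : IntervalIntegrable
          (fun t => iterInt Y a u t * deriv (fun s => Y s i) t) volume a c :=
        (iterInt_mul_intInt hab hfi u i).mono_set hsub
      have h2 : IntervalIntegrable
          (fun t => iterInt Y a v t * deriv (fun s => Y s j) t) volume a c :=
        (iterInt_mul_intInt hab hfi v j).mono_set hsub
      calc iterInt Y a (i :: u) c * iterInt Y a (j :: v) c
          = (∫ s in a..c, iterInt Y a u s * deriv (fun s' => Y s' i) s)
              * (∫ t in a..c, iterInt Y a v t * deriv (fun s' => Y s' j) t) := rfl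
        _ = (∫ t in a..c, (∫ s in a..t, iterInt Y a u s * deriv (fun s' => Y s' i) s)
              * (iterInt Y a v t * deriv (fun s' => Y s' j) t))
            + (∫ t in a..c, (∫ s in a..t, iterInt Y a v s * deriv (fun s' => Y s' j) s)
              * (iterInt Y a u t * deriv (fun s' => Y s' i) t)) :=
            prod_primitive hc.1 h1 h2
        _ = (∫ t in a..c,
              ((shuffles (i :: u) v).map (fun w => iterInt Y a w t)).sum
                * deriv (fun s' => Y s' j) t)
            + (∫ t in a..c,
              ((shuffles u (j :: v)).map (fun w => iterInt Y a w t)).sum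
                * deriv (fun s' => Y s' i) t) := by
            congr 1
            · refine intervalIntegral.integral_congr (fun t ht => ?_)
              have ht' : t ∈ Set.Icc a b := by
                rw [Set.uIcc_of_le hc.1] at ht; exact hc' ht
              have hih := shuffle_iterInt hab hfi (i :: u) v t ht'
              show iterInt Y a (i :: u) t * (iterInt Y a v t * deriv (fun s' => Y s' j) t) = _
              rw [← mul_assoc, hih]
            · refine intervalIntegral.integral_congr (fun t ht => ?_)
              have ht' : t ∈ Set.Icc a b := by
                rw [Set.uIcc_of_le hc.1] at ht; exact hc' ht
              have hih := shuffle_iterInt hab hfi u (j :: v) t ht'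
              show iterInt Y a (j :: v) t * (iterInt Y a u t * deriv (fun s' => Y s' i) t) = _
              rw [← mul_assoc, mul_comm (iterInt Y a (j :: v) t) (iterInt Y a u t), hih]
        _ = ((shuffles (i :: u) v).map
              (fun w => ∫ t in a..c, iterInt Y a w t * deriv (fun s' => Y s' j) t)).sum
            + ((shuffles u (j :: v)).map
              (fun w => ∫ t in a..c, iterInt Y a w t * deriv (fun s' => Y s' i) t)).sum := by
            rw [multiset_integral hab hfi j _ hc, multiset_integral hab hfi i _ hc]
        _ = (((shuffles (i :: u) v).map (j :: ·)).map (fun w => iterInt Y a w c)).sum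
            + (((shuffles u (j :: v)).map (i :: ·)).map (fun w => iterInt Y a w c)).sum := by
            rw [Multiset.map_map, Multiset.map_map]
            rfl
        _ = ((shuffles (i :: u) (j :: v)).map (fun w => iterInt Y a w c)).sum := by
            rw [shuffles, Multiset.map_add, Multiset.sum_add, add_comm]
  termination_by u v => u.length + v.length

end IterInt

section Dedekind

/-- Dedekind-style linear independence from a multiplicativity property. -/
private lemma dedekind_aux {n : ℕ} {W : Type*} (S : Fin n → W → ℝ) (e : W)
    (hone : ∀ j, S j e = 1)
    (hmul : ∀ u w : W, ∃ M : Multiset W, ∀ j, S j u * S j w = (M.map (S j)).sum)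
    (hdist : ∀ i j, i ≠ j → S i ≠ S j) :
    ∀ (s : Finset (Fin n)) (c : Fin n → ℝ),
      (∀ w, ∑ j ∈ s, c j * S j w = 0) → ∀ i ∈ s, c i = 0 := by
  intro s
  induction s using Finset.strongInduction with
  | _ s ih =>
    intro c hrel i hi
    have hzero : ∀ j ∈ s, j ≠ i → c j = 0 := by
      intro j hj hne
      obtain ⟨u, hu⟩ : ∃ u, S j u ≠ S i u := by
        by_contra h
        push_neg at h
        exact hdist j i hne (funext h)
      have hrel' : ∀ w, ∑ k ∈ s.erase i, (c k * (S k u - S i u)) * S k w = 0 := by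
        intro w
        obtain ⟨M, hM⟩ := hmul u w
        have haux : ∀ (M : Multiset W) (g : Fin n → W → ℝ),
            ∑ k ∈ s, (M.map (g k)).sum = (M.map (fun v => ∑ k ∈ s, g k v)).sum := by
          intro M g
          induction M using Multiset.induction_on with
          | empty => simp
          | cons x M ihM =>
              simp only [Multiset.map_cons, Multiset.sum_cons, Finset.sum_add_distrib, ihM]
        have h1 : ∑ k ∈ s, c k * (S k u * S k w) = 0 := by
          calc ∑ k ∈ s, c k * (S k u * S k w)
              = ∑ k ∈ s, (M.map (fun v => c k * S k v)).sum := by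
                refine Finset.sum_congr rfl fun k _ => ?_
                rw [hM k, Multiset.sum_map_mul_left]
            _ = (M.map (fun v => ∑ k ∈ s, c k * S k v)).sum := haux M _
            _ = 0 := by
                refine Multiset.sum_eq_zero fun x hx => ?_
                obtain ⟨v, _, rfl⟩ := Multiset.mem_map.1 hx
                exact hrel v
        have h2 : ∑ k ∈ s, (c k * (S k u - S i u)) * S k w = 0 := by
          calc ∑ k ∈ s, (c k * (S k u - S i u)) * S k w
              = (∑ k ∈ s, c k * (S k u * S k w)) - S i u * ∑ k ∈ s, c k * S k w := by
                rw [Finset.mul_sum, ← Finset.sum_sub_distrib]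
                exact Finset.sum_congr rfl fun k _ => by ring
            _ = 0 := by rw [h1, hrel w]; ring
        rw [Finset.sum_erase s (by simp)]
        exact h2
      have hcj := ih (s.erase i) (Finset.erase_ssubset hi) _ hrel' j
        (Finset.mem_erase.2 ⟨hne, hj⟩)
      rcases mul_eq_zero.1 hcj with h | h
      · exact h
      · exact absurd (sub_eq_zero.1 h) hu
    have := hrel e
    rw [Finset.sum_eq_single i (fun k hk hki => by rw [hzero k hk hki, zero_mul])
      (fun h => absurd hi h)] at this
    rw [hone i, mul_one] at this
    exact this

end Dedekind

/-- a discrete measure on paths with pairwise distinct signatures can be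
recovered from its expected signature via separating linear forms. -/
theorem recover_discrete_measure {d n : ℕ} (X : Fin n → ℝ → Fin d → ℝ) (a b : Fin n → ℝ)
    (hab : ∀ i, a i ≤ b i)
    (hc : ∀ i, ContinuousOn (X i) (Set.Icc (a i) (b i)))
    (hv : ∀ i, BoundedVariationOn (X i) (Set.Icc (a i) (b i)))
    (hdist : ∀ i j, i ≠ j → Sig (X i) (a i) (b i) ≠ Sig (X j) (a j) (b j))
    (lam : Fin n → ℝ) (hnn : ∀ i, 0 ≤ lam i) (hsum : ∑ i, lam i = 1) :
    ∀ i, ∃ L : (List (Fin d) → ℝ) →ₗ[ℝ] ℝ,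
      (∀ j, L (Sig (X j) (a j) (b j)) = if i = j then 1 else 0) ∧
      lam i = L (∑ j, lam j • Sig (X j) (a j) (b j)) := by
  intro i
  set S : Fin n → (List (Fin d) → ℝ) := fun j => Sig (X j) (a j) (b j) with hS
  have hfi : ∀ j i', IntervalIntegrable
      (fun u => deriv (fun s => X j s i') u) volume (a j) (b j) := by
    intro j i'
    exact bv_deriv_intervalIntegrable (hab j)
      ((LipschitzWith.eval i').comp_boundedVariationOn (hv j))
  have hone : ∀ j, S j [] = 1 := fun j => rfl
  have hmul : ∀ u w : List (Fin d), ∃ M : Multiset (List (Fin d)),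
      ∀ j, S j u * S j w = (M.map (S j)).sum := by
    intro u w
    refine ⟨(shuffles u.reverse w.reverse).map List.reverse, fun j => ?_⟩
    have hb : b j ∈ Set.Icc (a j) (b j) := Set.right_mem_Icc.2 (hab j)
    have hkey := shuffle_iterInt (hab j) (hfi j) u.reverse w.reverse (b j) hb
    calc S j u * S j w
        = ((shuffles u.reverse w.reverse).map
            (fun z => iterInt (X j) (a j) z (b j))).sum := hkey
      _ = (((shuffles u.reverse w.reverse).map List.reverse).map (S j)).sum := by
          rw [Multiset.map_map]
          refine congrArg Multiset.sum (Multiset.map_congr rfl fun z _ => ?_)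
          show iterInt (X j) (a j) z (b j) = S j z.reverse
          simp only [hS, Sig, sigCoord, List.reverse_reverse]
  have hded := dedekind_aux S [] hone hmul hdist
  have hLI : LinearIndependent ℝ S := by
    rw [Fintype.linearIndependent_iff]
    intro g hg
    have hrel : ∀ w, ∑ j ∈ Finset.univ, g j * S j w = 0 := by
      intro w
      have := congrFun hg w
      simpa [Finset.sum_apply] using this
    exact fun j => hded Finset.univ g hrel j (Finset.mem_univ j)
  obtain ⟨L, hL⟩ := LinearMap.exists_extend
    ((Finsupp.lapply i).comp
      (hLI.repr : Submodule.span ℝ (Set.range S) →ₗ[ℝ] (Fin n →₀ ℝ)))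
  have hLval : ∀ j, L (S j) = if i = j then 1 else 0 := by
    intro j
    have hmem : S j ∈ Submodule.span ℝ (Set.range S) :=
      Submodule.subset_span (Set.mem_range_self j)
    have h1 : L (S j) = (hLI.repr ⟨S j, hmem⟩) i := by
      have := congrArg
        (fun φ : (Submodule.span ℝ (Set.range S)) →ₗ[ℝ] ℝ => φ ⟨S j, hmem⟩) hL
      simpa using this
    rw [h1, hLI.repr_eq_single j _ rfl, Finsupp.single_apply]
    simp [eq_comm]
  refine ⟨L, hLval, ?_⟩
  rw [map_sum]
  have hLval' : ∀ j, L (Sig (X j) (a j) (b j)) = if i = j then 1 else 0 := hLval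
  simp only [_root_.map_smul, hLval', smul_eq_mul, mul_ite, mul_one, mul_zero]
  rw [Finset.sum_ite_eq Finset.univ i lam]
  simp
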